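/- For all real a ≥ b ≥ 0 and x ≥ 0, 2ax - 2b(1 - e^{-x}) - b(1 - e^{-x})² ≥ (24ax³ + 13ax⁴ + 2ax⁵)/(6 + 4x + x²)². -/

import Mathlib

private lemma quad_le_exp (x : ℝ) (hx : 0 ≤ x) : 2 + 2 * x + x ^ 2 ≤ 2 * Real.exp x := by
  have h := Real.sum_le_exp_of_nonneg hx 3
  simp [Finset.sum_range_succ, Nat.factorial] at h
  nlinarith [h]

private lemma pade_key (x : ℝ) (hx : 0 ≤ x) :
    6 - 2 * x ≤ (6 + 4 * x + x ^ 2) * Real.exp (-x) := by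
  set f : ℝ → ℝ := fun y => (6 + 4 * y + y ^ 2) * Real.exp (-y) + 2 * y - 6 with hf
  have hderiv : ∀ y : ℝ, HasDerivAt f (2 - (2 + 2 * y + y ^ 2) * Real.exp (-y)) y := by
    intro y
    have h1 : HasDerivAt (fun y : ℝ => 6 + 4 * y + y ^ 2) (4 + 2 * y) y := by
      have := (((hasDerivAt_id y).const_mul 4).const_add 6).add (hasDerivAt_pow 2 y)
      convert this using 1
      · rfl
      · rfl
      · ext z; simp
      · simp
    have h2 : HasDerivAt (fun y : ℝ => Real.exp (-y)) (-Real.exp (-y)) y := by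
      have := (hasDerivAt_neg y).exp
      convert this using 1
      ring
    have h3 := ((h1.mul h2).add ((hasDerivAt_id y).const_mul 2)).sub_const 6
    have h4 : HasDerivAt f
        ((4 + 2 * y) * Real.exp (-y) + (6 + 4 * y + y ^ 2) * (-Real.exp (-y)) + 2 * 1) y := by
      simpa [hf, mul_comm] using h3
    convert h4 using 1
    ring
  have hmono : MonotoneOn f (Set.Ici (0 : ℝ)) := by
    apply monotoneOn_of_deriv_nonneg (convex_Ici 0)
    · exact Continuous.continuousOn (by
        fun_prop)
    · intro y hy
      exact (hderiv y).differentiableAt.differentiableWithinAt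
    · intro y hy
      rw [(hderiv y).deriv]
      simp only [Set.mem_Ioi, interior_Ici] at hy
      have h5 := quad_le_exp y hy.le
      have h6 : Real.exp (-y) * Real.exp y = 1 := by
        rw [← Real.exp_add]; simp
      have h7 : (0:ℝ) < Real.exp (-y) := Real.exp_pos _
      nlinarith [Real.exp_pos y]
  have h0 : f 0 ≤ f x := hmono (Set.self_mem_Ici) hx hx
  simp [hf] at h0
  linarith [h0]

theorem exp_elementary_bounds_six (a b x : ℝ) (hab : b ≤ a) (hb : 0 ≤ b) (hx : 0 ≤ x) :
    (24 * a * x ^ 3 + 13 * a * x ^ 4 + 2 * a * x ^ 5) / (6 + 4 * x + x ^ 2) ^ 2 ≤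
      2 * a * x - 2 * b * (1 - Real.exp (-x)) - b * (1 - Real.exp (-x)) ^ 2 := by
  have hd : (0:ℝ) < 6 + 4 * x + x ^ 2 := by nlinarith
  set u : ℝ := 1 - Real.exp (-x) with hu
  set u₀ : ℝ := (x ^ 2 + 6 * x) / (6 + 4 * x + x ^ 2) with hu0
  have hune : 0 ≤ u := by
    have : Real.exp (-x) ≤ 1 := by
      rw [Real.exp_le_one_iff]; linarith
    simp [hu]; linarith
  have huu0 : u ≤ u₀ := by
    rw [hu0, le_div_iff₀ hd]
    have := pade_key x hx
    nlinarith [this]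
  have hq : (24 * a * x ^ 3 + 13 * a * x ^ 4 + 2 * a * x ^ 5) / (6 + 4 * x + x ^ 2) ^ 2
      = a * (2 * x - 2 * u₀ - u₀ ^ 2) := by
    rw [hu0]
    field_simp
    ring
  rw [hq]
  have key : b * (2 * u + u ^ 2) ≤ a * (2 * u₀ + u₀ ^ 2) := by
    have h1 : 2 * u + u ^ 2 ≤ 2 * u₀ + u₀ ^ 2 := by nlinarith
    have h2 : 0 ≤ 2 * u + u ^ 2 := by nlinarith
    nlinarith
  nlinarith [key]
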